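/- arXiv:0902.1950 — 3 statements merged into one kernel-verified Lean document; each statement's English description precedes it below -/
import Mathlib

section
/- Ore's distributivity theorem for partitions: let U be a type and φ, σ, τ, π : Setoid U. Then φ ⊓ (partImp σ π ⊔ partImp τ π) = (φ ⊓ partImp σ π) ⊔ (φ ⊓ partImp τ π) as setoids. (Partition reading: φ ∨ (¬^π σ ∧ ¬^π τ) = (φ ∨ ¬^π σ) ∧ (φ ∨ ¬^π τ), i.e., any partition joined with the meet of two π-regular partitions distributes across the meet.) -/
/-- The partition implication `σ ⇒ π`: the setoid generated by the relation
`fun a b => π.Rel a b ∧ ¬ σ.Rel a b`. -/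
def partImp {U : Type*} (σ π : Setoid U) : Setoid U :=
  Relation.EqvGen.setoid (fun a b => π a b ∧ ¬ σ a b)

/-- A π-block is non-σ-uniform at `a`. -/
def nonunif {U : Type*} (σ π : Setoid U) (a : U) : Prop :=
  ∃ c d, π a c ∧ π a d ∧ ¬ σ c d

lemma nonunif_transfer {U : Type*} {σ π : Setoid U} {a b : U}
    (hab : π a b) (h : nonunif σ π a) : nonunif σ π b := by
  obtain ⟨c, d, hc, hd, hcd⟩ := h
  exact ⟨c, d, π.trans (π.symm hab) hc, π.trans (π.symm hab) hd, hcd⟩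

lemma partImp_rel_iff {U : Type*} (σ π : Setoid U) (a b : U) :
    (partImp σ π) a b ↔ a = b ∨ (π a b ∧ nonunif σ π a) := by
  constructor
  · intro h
    induction h with
    | rel x y hxy => exact Or.inr ⟨hxy.1, x, y, π.refl x, hxy.1, hxy.2⟩
    | refl x => exact Or.inl rfl
    | symm x y _ ih =>
      rcases ih with rfl | ⟨hπ, hn⟩
      · exact Or.inl rfl
      · exact Or.inr ⟨π.symm hπ, nonunif_transfer hπ hn⟩
    | trans x y z _ _ ih₁ ih₂ =>
      rcases ih₁ with rfl | ⟨hπ₁, hn₁⟩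
      · exact ih₂
      · rcases ih₂ with rfl | ⟨hπ₂, _⟩
        · exact Or.inr ⟨hπ₁, hn₁⟩
        · exact Or.inr ⟨π.trans hπ₁ hπ₂, hn₁⟩
  · rintro (rfl | ⟨hπ, c, d, hc, hd, hcd⟩)
    · exact Relation.EqvGen.refl a
    · by_cases hab : σ a b
      · -- need an intermediate point
        have : ∃ e, π a e ∧ ¬ σ a e := by
          by_cases hac : σ a c
          · refine ⟨d, hd, fun had => hcd ?_⟩
            exact σ.trans (σ.symm hac) had
          · exact ⟨c, hc, hac⟩
        obtain ⟨e, hπe, hσe⟩ := this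
        refine Relation.EqvGen.trans a e b (Relation.EqvGen.rel _ _ ⟨hπe, hσe⟩)
          (Relation.EqvGen.rel _ _ ⟨π.trans (π.symm hπe) hπ, fun heb => hσe ?_⟩)
        exact σ.trans hab (σ.symm heb)
      · exact Relation.EqvGen.rel _ _ ⟨hπ, hab⟩

lemma sup_partImp_rel {U : Type*} {σ τ π : Setoid U} {a b : U}
    (h : (partImp σ π ⊔ partImp τ π) a b) :
    (partImp σ π) a b ∨ (partImp τ π) a b := by
  have h' : (Relation.EqvGen.setoid fun x y =>
      (partImp σ π) x y ∨ (partImp τ π) x y) a b := by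
    rwa [← Setoid.sup_eq_eqvGen]
  clear h
  have key : a = b ∨ (π a b ∧ (nonunif σ π a ∨ nonunif τ π a)) := by
    induction h' with
    | rel x y hxy =>
      rcases hxy with h | h
      · rcases (partImp_rel_iff σ π x y).1 h with rfl | ⟨hπ, hn⟩
        · exact Or.inl rfl
        · exact Or.inr ⟨hπ, Or.inl hn⟩
      · rcases (partImp_rel_iff τ π x y).1 h with rfl | ⟨hπ, hn⟩
        · exact Or.inl rfl
        · exact Or.inr ⟨hπ, Or.inr hn⟩
    | refl x => exact Or.inl rfl
    | symm x y _ ih =>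
      rcases ih with rfl | ⟨hπ, hn⟩
      · exact Or.inl rfl
      · exact Or.inr ⟨π.symm hπ,
          hn.imp (nonunif_transfer hπ) (nonunif_transfer hπ)⟩
    | trans x y z _ _ ih₁ ih₂ =>
      rcases ih₁ with rfl | ⟨hπ₁, hn₁⟩
      · exact ih₂
      · rcases ih₂ with rfl | ⟨hπ₂, _⟩
        · exact Or.inr ⟨hπ₁, hn₁⟩
        · exact Or.inr ⟨π.trans hπ₁ hπ₂, hn₁⟩
  rcases key with rfl | ⟨hπ, hn | hn⟩
  · exact Or.inl ((partImp σ π).refl a)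
  · exact Or.inl ((partImp_rel_iff σ π a b).2 (Or.inr ⟨hπ, hn⟩))
  · exact Or.inr ((partImp_rel_iff τ π a b).2 (Or.inr ⟨hπ, hn⟩))

/-- **Ore's distributivity theorem for partitions**: any partition joined with the meet
of two `π`-regular partitions distributes across the meet,
`φ ∨ (¬^π σ ∧ ¬^π τ) = (φ ∨ ¬^π σ) ∧ (φ ∨ ¬^π τ)`, stated in setoid terms. -/
theorem ore_distributivity {U : Type*} (φ σ τ π : Setoid U) :
    φ ⊓ (partImp σ π ⊔ partImp τ π) = (φ ⊓ partImp σ π) ⊔ (φ ⊓ partImp τ π) := by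
  refine le_antisymm ?_ le_inf_sup
  rw [Setoid.le_def]
  intro x y h
  obtain ⟨hφ, hsup⟩ := Setoid.inf_iff_and.1 h
  rcases sup_partImp_rel hsup with h | h
  · exact Setoid.le_def.1 le_sup_left (Setoid.inf_iff_and.2 ⟨hφ, h⟩)
  · exact Setoid.le_def.1 le_sup_right (Setoid.inf_iff_and.2 ⟨hφ, h⟩)
end

section
/- Dual to Ore's theorem: let U be a type and φ, σ, τ, π : Setoid U with φ ≤ π as setoids (i.e., π ⪯ φ in the refinement order, φ lies in the interval [π, 1]). Then φ ⊔ (partImp σ π ⊓ partImp τ π) = (φ ⊔ partImp σ π) ⊓ (φ ⊔ partImp τ π) as setoids. (Partition reading: φ ∧ (¬^π σ ∨ ¬^π τ) = (φ ∧ ¬^π σ) ∨ (φ ∧ ¬^π τ).) -/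
lemma partImp_le_right {U : Type*} (σ π : Setoid U) : partImp σ π ≤ π :=
  Setoid.eqvGen_le fun _ _ h => h.1

/-- If the block of `x` is split by `σ` (nontrivially), characterize membership. -/
lemma partImp_rel_of_split {U : Type*} (σ π : Setoid U) {a b c d : U}
    (hab : π a b) (hc : π a c) (hd : π a d) (hcd : ¬ σ c d) :
    (partImp σ π) a b := by
  by_cases hσ : σ a b
  · -- pick e among c, d not σ-related to a
    obtain he : ∃ e, π a e ∧ ¬ σ a e := by
      by_cases h : σ a c
      · exact ⟨d, hd, fun h' => hcd (σ.trans (σ.symm h) h')⟩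
      · exact ⟨c, hc, h⟩
    obtain ⟨e, hπe, hσe⟩ := he
    have h1 : (partImp σ π) a e := Relation.EqvGen.rel _ _ ⟨hπe, hσe⟩
    have h2 : (partImp σ π) e b := by
      refine Relation.EqvGen.rel _ _ ⟨π.trans (π.symm hπe) hab, fun h' => hσe ?_⟩
      exact σ.trans hσ (σ.symm h')
    exact (partImp σ π).trans h1 h2
  · exact Relation.EqvGen.rel _ _ ⟨hab, hσ⟩

lemma partImp_rel_cases {U : Type*} (σ π : Setoid U) {x y : U}
    (h : (partImp σ π) x y) :
    x = y ∨ (π x y ∧ ∃ c d, π x c ∧ π x d ∧ ¬ σ c d) := by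
  induction h with
  | rel u v huv => exact Or.inr ⟨huv.1, u, v, π.refl u, huv.1, huv.2⟩
  | refl u => exact Or.inl rfl
  | symm u v _ ih =>
    rcases ih with h | ⟨huv, c, d, hc, hd, hcd⟩
    · exact Or.inl h.symm
    · exact Or.inr ⟨π.symm huv, c, d, π.trans (π.symm huv) hc,
        π.trans (π.symm huv) hd, hcd⟩
  | trans u v w _ _ ih1 ih2 =>
    rcases ih1 with h | ⟨huv, c, d, hc, hd, hcd⟩
    · subst h; exact ih2
    · rcases ih2 with h | ⟨hvw, _, _, _, _, _⟩
      · subst h; exact Or.inr ⟨huv, c, d, hc, hd, hcd⟩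
      · exact Or.inr ⟨π.trans huv hvw, c, d, hc, hd, hcd⟩

/-- If the π-block of `a` is not split by `σ`, then `φ ⊔ partImp σ π` collapses to `φ` there. -/
lemma sup_partImp_rel_of_not_split {U : Type*} (φ σ π : Setoid U) (hφ : φ ≤ π) {a b : U}
    (hns : ¬ ∃ c d, π a c ∧ π a d ∧ ¬ σ c d)
    (h : (φ ⊔ partImp σ π) a b) : φ a b := by
  rw [Setoid.sup_eq_eqvGen] at h
  have key : ∀ x y : U, (Relation.EqvGen fun x y => φ x y ∨ (partImp σ π) x y) x y →
      π x y ∧ (¬ π a x ∨ φ x y) := by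
    intro x y h
    induction h with
    | rel u v huv =>
      rcases huv with h | h
      · exact ⟨Setoid.le_def.mp hφ h, Or.inr h⟩
      · refine ⟨Setoid.le_def.mp (partImp_le_right σ π) h, ?_⟩
        by_cases hax : π a u
        · rcases partImp_rel_cases σ π h with rfl | ⟨_, c, d, hc, hd, hcd⟩
          · exact Or.inr (φ.refl u)
          · exact absurd ⟨c, d, π.trans hax hc, π.trans hax hd, hcd⟩ hns
        · exact Or.inl hax
    | refl u => exact ⟨π.refl u, Or.inr (φ.refl u)⟩
    | symm u v _ ih =>
      refine ⟨π.symm ih.1, ?_⟩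
      rcases ih.2 with h | h
      · exact Or.inl fun hav => h (π.trans hav (π.symm ih.1))
      · exact Or.inr (φ.symm h)
    | trans u v w _ _ ih1 ih2 =>
      refine ⟨π.trans ih1.1 ih2.1, ?_⟩
      rcases ih1.2 with h | h1
      · exact Or.inl h
      · rcases ih2.2 with h | h2
        · exact Or.inl fun hau => h (π.trans hau ih1.1)
        · exact Or.inr (φ.trans h1 h2)
  have := (key a b h).2
  rcases this with h' | h'
  · exact absurd (π.refl a) h'
  · exact h'

/-- **Dual to Ore's theorem**: if `φ` lies in the interval `[π, 1]` of the partition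
lattice (i.e. `φ ≤ π` as setoids), then
`φ ∧ (¬^π σ ∨ ¬^π τ) = (φ ∧ ¬^π σ) ∨ (φ ∧ ¬^π τ)`, stated in setoid terms. -/
theorem ore_dual_distributivity {U : Type*} (φ σ τ π : Setoid U) (hφ : φ ≤ π) :
    φ ⊔ (partImp σ π ⊓ partImp τ π) = (φ ⊔ partImp σ π) ⊓ (φ ⊔ partImp τ π) := by
  apply le_antisymm
  · exact le_inf (sup_le_sup_left inf_le_left φ) (sup_le_sup_left inf_le_right φ)
  · rw [Setoid.le_def]
    intro a b hab
    obtain ⟨h1, h2⟩ : (φ ⊔ partImp σ π) a b ∧ (φ ⊔ partImp τ π) a b := hab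
    by_cases hs : ∃ c d, π a c ∧ π a d ∧ ¬ σ c d
    · by_cases ht : ∃ c d, π a c ∧ π a d ∧ ¬ τ c d
      · -- both split: a, b directly related in the meet
        have hπ : π a b :=
          Setoid.le_def.mp (sup_le hφ (partImp_le_right σ π)) h1
        obtain ⟨c, d, hc, hd, hcd⟩ := hs
        obtain ⟨c', d', hc', hd', hcd'⟩ := ht
        have hA := partImp_rel_of_split σ π hπ hc hd hcd
        have hB := partImp_rel_of_split τ π hπ hc' hd' hcd'
        exact Setoid.le_def.mp le_sup_right (⟨hA, hB⟩ :
          (partImp σ π ⊓ partImp τ π) a b)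
      · exact Setoid.le_def.mp le_sup_left
          (sup_partImp_rel_of_not_split φ τ π hφ ht h2)
    · exact Setoid.le_def.mp le_sup_left
        (sup_partImp_rel_of_not_split φ σ π hφ hs h1)
end

section
/- The weak law of excluded middle for π-negation is a partition tautology: let U be a type and σ, π : Setoid U. Then partImp σ π ⊓ partImp (partImp σ π) π = ⊥ as setoids. (Partition reading: ¬^π σ ∨ ¬^π¬^π σ = 1 for all partitions σ, π on U; this is the single π-negation transform of the classical law of excluded middle, a partition tautology that is not intuitionistically valid.) -/
private lemma eqvGen_sub {U : Type*} (π : Setoid U) (r : U → U → Prop)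
    (hr : ∀ x y, r x y → π x y) :
    ∀ x y, Relation.EqvGen r x y → π x y := by
  intro x y h
  induction h with
  | rel x y h => exact hr x y h
  | refl x => exact π.refl x
  | symm x y _ ih => exact π.symm ih
  | trans x y z _ _ ih1 ih2 => exact π.trans ih1 ih2

private lemma eqvGen_local {U : Type*} (π : Setoid U) (r : U → U → Prop)
    (hr : ∀ x y, r x y → π x y) (a : U)
    (htriv : ∀ x y, π a x → r x y → x = y) :
    ∀ x y, Relation.EqvGen r x y → π a x → x = y := by
  intro x y h
  induction h with
  | rel x y h => exact fun hax => htriv x y hax h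
  | refl x => exact fun _ => rfl
  | symm x y h ih =>
    intro hay
    have hxy := eqvGen_sub π r hr x y h
    have hax : π a x := π.trans hay (π.symm hxy)
    exact (ih hax).symm
  | trans x y z hxy _ ih1 ih2 =>
    intro hax
    have hxy' := ih1 hax
    subst hxy'
    exact ih2 hax

private lemma partImp_sub {U : Type*} (σ π : Setoid U) :
    ∀ x y, (partImp σ π) x y → π x y :=
  eqvGen_sub π _ (fun _ _ h => h.1)

/-- **Weak law of excluded middle for `π`-negation is a partition tautology**:
`¬^π σ ∨ ¬^π ¬^π σ = 1` for all partitions `σ`, `π`; in setoid terms (partition join is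
setoid `⊓`, the discrete partition `1` is setoid `⊥`). -/
theorem weak_excluded_middle_tautology {U : Type*} (σ π : Setoid U) :
    partImp σ π ⊓ partImp (partImp σ π) π = ⊥ := by
  apply Setoid.ext
  intro a b
  rw [Setoid.bot_def]
  constructor
  · rintro ⟨h1, h2⟩
    by_cases hblob : ∀ x y, π a x → π a y → σ x y
    · -- σ is indiscrete on the π-block of a, so partImp σ π is trivial there
      refine eqvGen_local π _ (fun _ _ h => h.1) a ?_ a b h1 (π.refl a)
      intro x y hax ⟨hxy, hnσ⟩
      exact absurd (hblob x y hax (π.trans hax hxy)) hnσ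
    · -- partImp σ π is indiscrete on the π-block of a
      push_neg at hblob
      obtain ⟨u, v, hau, hav, huv⟩ := hblob
      have step : ∀ p q, π a p → π a q → ¬σ p q → (partImp σ π) p q :=
        fun p q hp hq hn => Relation.EqvGen.rel p q ⟨π.trans (π.symm hp) hq, hn⟩
      have key : ∀ x, π a x → (partImp σ π) x u ∨
          (σ x u ∧ (partImp σ π) x v) := by
        intro x hax
        by_cases hxu : σ x u
        · exact Or.inr ⟨hxu, step x v hax hav (fun h => huv (σ.trans (σ.symm hxu) h))⟩
        · exact Or.inl (step x u hax hau hxu)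
      have tuv : (partImp σ π) u v := step u v hau hav huv
      have tau : ∀ x y, π a x → π a y → (partImp σ π) x y := by
        intro x y hax hay
        rcases key x hax with hx | ⟨_, hx⟩ <;> rcases key y hay with hy | ⟨_, hy⟩
        · exact (partImp σ π).trans hx ((partImp σ π).symm hy)
        · exact (partImp σ π).trans hx
            ((partImp σ π).trans tuv ((partImp σ π).symm hy))
        · exact (partImp σ π).trans hx
            ((partImp σ π).trans ((partImp σ π).symm tuv) ((partImp σ π).symm hy))
        · exact (partImp σ π).trans hx ((partImp σ π).symm hy)
      refine eqvGen_local π _ (fun _ _ h => h.1) a ?_ a b h2 (π.refl a)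
      intro x y hax ⟨hxy, hnτ⟩
      exact absurd (tau x y hax (π.trans hax hxy)) hnτ
  · rintro rfl
    exact ⟨(partImp σ π).refl a, (partImp (partImp σ π) π).refl a⟩
end
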